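/- The double integral ∫₀¹∫₀¹ (b-1)²(b-a)(a - 1/2)/(a+b-2)³ da db equals (ln 256 - 5)/12. -/

import Mathlib

open Real Set Filter Topology intervalIntegral

noncomputable def Fb (b : ℝ) : ℝ :=
  (b-1)^2 * (Real.log (2-b) - Real.log (1-b)) - (b-1)^2*(5-2*b)/(2*(2-b)^2)

lemma inner_eq {b : ℝ} (hb : b < 1) :
    (∫ a in (0:ℝ)..1, (b - 1) ^ 2 * (b - a) * (a - 1 / 2) / (a + b - 2) ^ 3) = Fb b := by
  have key : ∫ a in (0:ℝ)..1, (b - 1) ^ 2 * (b - a) * (a - 1 / 2) / (a + b - 2) ^ 3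
      = (fun x : ℝ => (b-1)^2 * ( -Real.log (2-x-b) - (3*b-7/2)/(x+b-2)
          - ((b-1)-2*(b-1)^2)/(2*(x+b-2)^2) )) 1
        - (fun x : ℝ => (b-1)^2 * ( -Real.log (2-x-b) - (3*b-7/2)/(x+b-2)
          - ((b-1)-2*(b-1)^2)/(2*(x+b-2)^2) )) 0 := by
    apply intervalIntegral.integral_eq_sub_of_hasDerivAt
      (f := fun x : ℝ => (b-1)^2 * ( -Real.log (2-x-b) - (3*b-7/2)/(x+b-2)
          - ((b-1)-2*(b-1)^2)/(2*(x+b-2)^2) ))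
      (f' := fun x : ℝ => (b-1)^2 * (b-x) * (x-1/2)/(x+b-2)^3)
    · intro x hx
      rw [uIcc_of_le (by norm_num : (0:ℝ) ≤ 1)] at hx
      have hpos : 0 < 2 - x - b := by cases hx; linarith
      have hne : x + b - 2 ≠ 0 := by linarith
      have h0 : HasDerivAt (fun x : ℝ => 2 - x - b) (-1) x := by
        have : (fun x : ℝ => 2 - x - b) = fun x => (2-b) - x := by funext y; ring
        rw [this]
        simpa using (hasDerivAt_id x).const_sub (2-b)
      have h1 : HasDerivAt (fun x : ℝ => x + b - 2) 1 x := by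
        have : (fun x : ℝ => x + b - 2) = fun x => x + (b-2) := by funext y; ring
        rw [this]
        simpa using (hasDerivAt_id x).add_const (b-2)
      have hlog : HasDerivAt (fun x : ℝ => Real.log (2-x-b)) (-1/(2-x-b)) x :=
        h0.log (ne_of_gt hpos)
      have hd1 : HasDerivAt (fun x : ℝ => (3*b-7/2)/(x+b-2))
          ((0*(x+b-2) - (3*b-7/2)*1)/(x+b-2)^2) x :=
        (hasDerivAt_const x (3*b-7/2)).div h1 hne
      have hden : HasDerivAt (fun x : ℝ => 2*(x+b-2)^2) (2*(2*(x+b-2)^1*1)) x :=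
        (h1.pow 2).const_mul 2
      have hne2 : 2*(x+b-2)^2 ≠ 0 := by positivity
      have hd2 : HasDerivAt (fun x : ℝ => ((b-1)-2*(b-1)^2)/(2*(x+b-2)^2))
          ((0*(2*(x+b-2)^2) - ((b-1)-2*(b-1)^2)*(2*(2*(x+b-2)^1*1)))/(2*(x+b-2)^2)^2) x :=
        (hasDerivAt_const x ((b-1)-2*(b-1)^2)).div hden hne2
      have := ((hlog.neg.sub hd1).sub hd2).const_mul ((b-1)^2)
      refine this.congr_deriv ?_
      field_simp
      ring
    · apply ContinuousOn.intervalIntegrable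
      apply ContinuousOn.div
      · fun_prop
      · fun_prop
      · intro x hx
        rw [uIcc_of_le (by norm_num : (0:ℝ) ≤ 1)] at hx
        have : x + b - 2 < 0 := by cases hx; linarith
        exact pow_ne_zero _ (by linarith)
  rw [key]
  have e1 : (2:ℝ) - 1 - b = 1 - b := by ring
  have e2 : (2:ℝ) - 0 - b = 2 - b := by ring
  simp only [e1, e2]
  have hb1 : (1:ℝ) - b ≠ 0 := by linarith
  have hb2 : (2:ℝ) - b ≠ 0 := by linarith
  have hb1' : b - 1 ≠ 0 := by linarith
  have hb2' : b - 2 ≠ 0 := by linarith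
  unfold Fb
  have h1 : (1:ℝ) + b - 2 = b - 1 := by ring
  have h0 : (0:ℝ) + b - 2 = b - 2 := by ring
  rw [h1, h0]
  field_simp
  ring


noncomputable def Gb (b : ℝ) : ℝ :=
  (-((1-b)^3/3 + 1/3))*Real.log (2-b) + ((1-b)^3/3)*Real.log (1-b)
    + (1-b)^2/3 - (1-b)/6 - 1/(2*(2-b))

lemma loglim (n : ℕ) (hn : 0 < n) :
    Tendsto (fun b : ℝ => Real.log (1-b) * (1-b)^n) (𝓝[<] (1:ℝ)) (𝓝 0) := by
  have hmap : Tendsto (fun b : ℝ => 1 - b) (𝓝[<] (1:ℝ)) (𝓝[>] (0:ℝ)) := by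
    rw [tendsto_nhdsWithin_iff]
    constructor
    · have h := (continuous_sub_left (1:ℝ)).tendsto 1
      simpa using h.mono_left (nhdsWithin_le_nhds : 𝓝[<] (1:ℝ) ≤ 𝓝 1)
    · filter_upwards [self_mem_nhdsWithin] with x hx
      exact sub_pos.mpr (mem_Iio.mp hx)
  have h := (tendsto_log_mul_rpow_nhdsGT_zero
    (by exact_mod_cast hn : (0:ℝ) < (n:ℝ))).comp hmap
  refine h.congr' ?_
  filter_upwards [self_mem_nhdsWithin] with x _
  simp [Function.comp, Real.rpow_natCast]

lemma outer : (∫ b in (0:ℝ)..1, Fb b) = (Real.log 256 - 5) / 12 := by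
  have hderiv : ∀ x ∈ Ioo (0:ℝ) 1, HasDerivAt Gb (Fb x) x := by
    intro x hx
    obtain ⟨hx0, hx1⟩ := hx
    have h1pos : (0:ℝ) < 1 - x := by linarith
    have h2pos : (0:ℝ) < 2 - x := by linarith
    have h1 : HasDerivAt (fun y : ℝ => 1 - y) (-1) x := by
      simpa using (hasDerivAt_id x).const_sub 1
    have h2 : HasDerivAt (fun y : ℝ => 2 - y) (-1) x := by
      simpa using (hasDerivAt_id x).const_sub 2
    have hlog1 : HasDerivAt (fun y : ℝ => Real.log (1-y)) (-1/(1-x)) x :=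
      h1.log (ne_of_gt h1pos)
    have hlog2 : HasDerivAt (fun y : ℝ => Real.log (2-y)) (-1/(2-x)) x :=
      h2.log (ne_of_gt h2pos)
    have hq3 : HasDerivAt (fun y : ℝ => (1-y)^3/3) ((3*(1-x)^(3-1)*(-1))/3) x :=
      (h1.pow 3).div_const 3
    have hp13 : HasDerivAt (fun y : ℝ => (1-y)^3/3 + 1/3) ((3*(1-x)^(3-1)*(-1))/3) x :=
      hq3.add_const (1/3)
    have hA : HasDerivAt (fun y : ℝ => (-((1-y)^3/3 + 1/3))*Real.log (2-y))
        ((-((3*(1-x)^(3-1)*(-1))/3))*Real.log (2-x) + (-((1-x)^3/3 + 1/3))*(-1/(2-x))) x :=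
      hp13.neg.mul hlog2
    have hB : HasDerivAt (fun y : ℝ => ((1-y)^3/3)*Real.log (1-y))
        (((3*(1-x)^(3-1)*(-1))/3)*Real.log (1-x) + ((1-x)^3/3)*(-1/(1-x))) x :=
      hq3.mul hlog1
    have hC : HasDerivAt (fun y : ℝ => (1-y)^2/3) ((2*(1-x)^(2-1)*(-1))/3) x :=
      (h1.pow 2).div_const 3
    have hD : HasDerivAt (fun y : ℝ => (1-y)/6) ((-1)/6) x := h1.div_const 6
    have hden : HasDerivAt (fun y : ℝ => 2*(2-y)) (2*(-1)) x := h2.const_mul 2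
    have hE : HasDerivAt (fun y : ℝ => 1/(2*(2-y)))
        ((0*(2*(2-x)) - 1*(2*(-1)))/(2*(2-x))^2) x :=
      (hasDerivAt_const x 1).div hden (by positivity)
    have htot := (((hA.add hB).add hC).sub hD).sub hE
    have hne1 : (1:ℝ) - x ≠ 0 := ne_of_gt h1pos
    have hne2 : (2:ℝ) - x ≠ 0 := ne_of_gt h2pos
    unfold Gb Fb
    refine htot.congr_deriv ?_
    field_simp
    ring
  have hcont : ContinuousOn Fb (Icc (0:ℝ) 1) := by
    intro x hx
    rcases lt_or_eq_of_le hx.2 with hlt | heq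
    · apply ContinuousAt.continuousWithinAt
      have c1 : ContinuousAt (fun y : ℝ => Real.log (2-y)) x :=
        (Real.continuousAt_log (by linarith)).comp (by fun_prop)
      have c2 : ContinuousAt (fun y : ℝ => Real.log (1-y)) x :=
        (Real.continuousAt_log (by linarith)).comp (by fun_prop)
      unfold Fb
      exact (((by fun_prop : ContinuousAt (fun y : ℝ => (y-1)^2) x).mul (c1.sub c2)).sub
        (ContinuousAt.div (by fun_prop) (by fun_prop)
          (by have h2 : (0:ℝ) < 2 - x := by linarith
              positivity)))
    · subst heq
      have c1 : ContinuousAt (fun y : ℝ => (y-1)^2 * Real.log (2-y)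
          - (y-1)^2*(5-2*y)/(2*(2-y)^2)) 1 := by
        have cl : ContinuousAt (fun y : ℝ => Real.log (2-y)) 1 :=
          (Real.continuousAt_log (by norm_num)).comp (by fun_prop)
        exact ((by fun_prop : ContinuousAt (fun y : ℝ => (y-1)^2) 1).mul cl).sub
          (ContinuousAt.div (by fun_prop) (by fun_prop) (by norm_num))
      have h2 : Tendsto Fb (𝓝[<] (1:ℝ)) (𝓝 (Fb 1)) := by
        have hA := (c1.tendsto).mono_left (nhdsWithin_le_nhds : 𝓝[<] (1:ℝ) ≤ 𝓝 1)
        have := hA.sub (loglim 2 (by norm_num))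
        refine this.congr' ?_ |>.mono_right (le_of_eq ?_)
        · filter_upwards with y
          unfold Fb
          ring
        · norm_num [Fb]
      have hsub : Icc (0:ℝ) 1 \ {1} ⊆ Iio 1 := by
        rintro y ⟨hy, hne⟩
        exact lt_of_le_of_ne hy.2 (by simpa using hne)
      exact continuousWithinAt_diff_self.mp (h2.mono_left (nhdsWithin_mono _ hsub))
  have hint : IntervalIntegrable Fb MeasureTheory.volume 0 1 := by
    apply ContinuousOn.intervalIntegrable
    rwa [uIcc_of_le (by norm_num : (0:ℝ) ≤ 1)]
  have ha : Tendsto Gb (𝓝[>] (0:ℝ)) (𝓝 (Gb 0)) := by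
    have c : ContinuousAt Gb 0 := by
      have cl2 : ContinuousAt (fun y : ℝ => Real.log (2-y)) 0 :=
        (Real.continuousAt_log (by norm_num)).comp (by fun_prop)
      have cl1 : ContinuousAt (fun y : ℝ => Real.log (1-y)) 0 :=
        (Real.continuousAt_log (by norm_num)).comp (by fun_prop)
      unfold Gb
      exact (((((by fun_prop : ContinuousAt (fun y : ℝ => -((1-y)^3/3 + 1/3)) 0).mul cl2).add
        ((by fun_prop : ContinuousAt (fun y : ℝ => (1-y)^3/3) 0).mul cl1)).add
        (by fun_prop)).sub (by fun_prop)).sub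
        (ContinuousAt.div (by fun_prop) (by fun_prop) (by norm_num))
    exact c.tendsto.mono_left nhdsWithin_le_nhds
  have hb : Tendsto Gb (𝓝[<] (1:ℝ)) (𝓝 (Gb 1)) := by
    have c1 : ContinuousAt (fun y : ℝ => (-((1-y)^3/3 + 1/3))*Real.log (2-y)
        + (1-y)^2/3 - (1-y)/6 - 1/(2*(2-y))) 1 := by
      have cl : ContinuousAt (fun y : ℝ => Real.log (2-y)) 1 :=
        (Real.continuousAt_log (by norm_num)).comp (by fun_prop)
      exact ((((by fun_prop : ContinuousAt (fun y : ℝ => -((1-y)^3/3 + 1/3)) 1).mul cl).add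
        (by fun_prop)).sub (by fun_prop)).sub
        (ContinuousAt.div (by fun_prop) (by fun_prop) (by norm_num))
    have hA := (c1.tendsto).mono_left (nhdsWithin_le_nhds : 𝓝[<] (1:ℝ) ≤ 𝓝 1)
    have := hA.add ((loglim 3 (by norm_num)).const_mul (1/3))
    refine this.congr' ?_ |>.mono_right (le_of_eq ?_)
    · filter_upwards with y
      unfold Gb
      ring
    · norm_num [Gb]
  have key := intervalIntegral.integral_eq_sub_of_hasDerivAt_of_tendsto
    (by norm_num : (0:ℝ) < 1) hderiv hint ha hb
  rw [key]
  have h256 : (256:ℝ) = 2^8 := by norm_num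
  rw [h256, Real.log_pow]
  norm_num [Gb, Real.log_one]
  ring


theorem stmt_3 :
    ∫ b in (0:ℝ)..1, ∫ a in (0:ℝ)..1,
        (b - 1) ^ 2 * (b - a) * (a - 1 / 2) / (a + b - 2) ^ 3 =
      (Real.log 256 - 5) / 12 := by
  rw [intervalIntegral.integral_congr (g := Fb) ?_]
  · exact outer
  · intro b hb
    rw [uIcc_of_le (by norm_num : (0:ℝ) ≤ 1)] at hb
    rcases lt_or_eq_of_le hb.2 with hlt | heq
    · exact inner_eq hlt
    · subst heq
      norm_num [Fb]
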